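/- Let V, W be finite-dimensional real inner product spaces, Π : W → V surjective, A : V → V symmetric positive definite, and B̃ : W → W symmetric positive definite. Set B = Π B̃ Πᵗ. Then λ_min(BA) = ( sup_{‖v‖_A = 1} inf_{Πw = v} ⟨B̃⁻¹w, w⟩ )⁻¹ and λ_max(BA) = ( inf_{‖v‖_A = 1} inf_{Πw = v} ⟨B̃⁻¹w, w⟩ )⁻¹. -/

import Mathlib

open scoped RealInnerProductSpace

open Module.End in
theorem aux_sym {E : Type*} [NormedAddCommGroup E] [InnerProductSpace ℝ E]
    [FiniteDimensional ℝ E] [Nontrivial E] (S : E →ₗ[ℝ] E) (hS : S.IsSymmetric) :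
    IsGreatest {μ : ℝ | HasEigenvalue S μ}
      (sSup {x : ℝ | ∃ v : E, ‖v‖ = 1 ∧ x = ⟪S v, v⟫}) ∧
    IsLeast {μ : ℝ | HasEigenvalue S μ}
      (sInf {x : ℝ | ∃ v : E, ‖v‖ = 1 ∧ x = ⟪S v, v⟫}) := by
  set R : Set ℝ := {x : ℝ | ∃ v : E, ‖v‖ = 1 ∧ x = ⟪S v, v⟫} with hRdef
  set g : Metric.sphere (0:E) 1 → ℝ := fun x => ⟪S x, x⟫ with hgdef
  have hR : R = Set.range g := by
    ext x
    constructor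
    · rintro ⟨v, hv, rfl⟩
      exact ⟨⟨v, by simpa [mem_sphere_zero_iff_norm] using hv⟩, rfl⟩
    · rintro ⟨⟨v, hv⟩, rfl⟩
      exact ⟨v, by simpa [mem_sphere_zero_iff_norm] using hv, rfl⟩
  have hcont : Continuous fun x : E => ⟪S x, x⟫ :=
    (S.continuous_of_finiteDimensional).inner continuous_id
  have hRim : R = (fun x : E => ⟪S x, x⟫) '' Metric.sphere 0 1 := by
    rw [hR, Set.image_eq_range]
  have hcomp : IsCompact ((fun x : E => ⟪S x, x⟫) '' Metric.sphere 0 1) :=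
    (isCompact_sphere _ _).image hcont
  have hbdda : BddAbove R := hRim ▸ hcomp.bddAbove
  have hbddb : BddBelow R := hRim ▸ hcomp.bddBelow
  -- sSup R equals the iSup over sphere
  have hsup : sSup R = ⨆ x : Metric.sphere (0:E) 1, g x := by
    rw [hR, ← sSup_range]
  have hinf : sInf R = ⨅ x : Metric.sphere (0:E) 1, g x := by
    rw [hR, ← sInf_range]
  -- relate to rayleigh
  have hray_sup : (⨆ x : { x : E // x ≠ 0 }, ⟪S x, x⟫ / ‖(x : E)‖ ^ 2) = sSup R := by
    rw [hsup]
    have := ContinuousLinearMap.iSup_rayleigh_eq_iSup_rayleigh_sphere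
      (T := LinearMap.toContinuousLinearMap S) (r := (1:ℝ)) one_pos
    simp only [ContinuousLinearMap.rayleighQuotient, ContinuousLinearMap.reApplyInnerSelf,
      LinearMap.coe_toContinuousLinearMap', RCLike.re_to_real] at this
    rw [this]
    refine iSup_congr fun x => ?_
    have hx : ‖(x : E)‖ = 1 := by simpa using mem_sphere_zero_iff_norm.mp x.2
    simp [hgdef, hx]
  have hray_inf : (⨅ x : { x : E // x ≠ 0 }, ⟪S x, x⟫ / ‖(x : E)‖ ^ 2) = sInf R := by
    rw [hinf]
    have := ContinuousLinearMap.iInf_rayleigh_eq_iInf_rayleigh_sphere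
      (T := LinearMap.toContinuousLinearMap S) (r := (1:ℝ)) one_pos
    simp only [ContinuousLinearMap.rayleighQuotient, ContinuousLinearMap.reApplyInnerSelf,
      LinearMap.coe_toContinuousLinearMap', RCLike.re_to_real] at this
    rw [this]
    refine iInf_congr fun x => ?_
    have hx : ‖(x : E)‖ = 1 := by simpa using mem_sphere_zero_iff_norm.mp x.2
    simp [hgdef, hx]
  -- every eigenvalue is in R
  have hmem : ∀ μ : ℝ, HasEigenvalue S μ → μ ∈ R := by
    intro μ hμ
    obtain ⟨v, hv⟩ := hμ.exists_hasEigenvector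
    have hv0 : v ≠ 0 := hv.2
    have hnv : ‖v‖ ≠ 0 := norm_ne_zero_iff.mpr hv0
    refine ⟨‖v‖⁻¹ • v, by simp [norm_smul, abs_of_nonneg, inv_mul_cancel₀ hnv], ?_⟩
    have hSv : S v = μ • v := hv.apply_eq_smul
    rw [map_smul, hSv]
    rw [real_inner_smul_left, real_inner_smul_left, real_inner_smul_right,
      real_inner_self_eq_norm_sq]
    field_simp
  have hsup_mem : HasEigenvalue S (sSup R) := by
    have := hS.hasEigenvalue_iSup_of_finiteDimensional
    simp only [RCLike.re_to_real] at this
    rwa [show ((⨆ x : { x : E // x ≠ 0 }, ⟪S x, x⟫ / ‖(x : E)‖ ^ 2 : ℝ) : ℝ) = sSup R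
      from hray_sup] at this
  have hinf_mem : HasEigenvalue S (sInf R) := by
    have := hS.hasEigenvalue_iInf_of_finiteDimensional
    simp only [RCLike.re_to_real] at this
    rwa [show ((⨅ x : { x : E // x ≠ 0 }, ⟪S x, x⟫ / ‖(x : E)‖ ^ 2 : ℝ) : ℝ) = sInf R
      from hray_inf] at this
  refine ⟨⟨hsup_mem, fun μ hμ => le_csSup hbdda (hmem μ hμ)⟩,
    ⟨hinf_mem, fun μ hμ => csInf_le hbddb (hmem μ hμ)⟩⟩

private def VAsyn (V : Type*) : Type _ := V

theorem stmt_8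
    {V W : Type*} [NormedAddCommGroup V] [InnerProductSpace ℝ V] [FiniteDimensional ℝ V]
    [NormedAddCommGroup W] [InnerProductSpace ℝ W] [FiniteDimensional ℝ W]
    (P : W →ₗ[ℝ] V) (hP : Function.Surjective P)
    (A : V →ₗ[ℝ] V) (hAsym : A.IsSymmetric) (hApos : ∀ v : V, v ≠ 0 → 0 < ⟪A v, v⟫)
    (Bt : W →ₗ[ℝ] W) (hBtsym : Bt.IsSymmetric) (hBtpos : ∀ w : W, w ≠ 0 → 0 < ⟪Bt w, w⟫)
    (Btinv : W →ₗ[ℝ] W) (h1 : Bt ∘ₗ Btinv = LinearMap.id) (h2 : Btinv ∘ₗ Bt = LinearMap.id)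
    (B : V →ₗ[ℝ] V) (hB : B = P ∘ₗ Bt ∘ₗ LinearMap.adjoint P) :
    sInf {μ : ℝ | Module.End.HasEigenvalue (B ∘ₗ A) μ} =
      (sSup {x : ℝ | ∃ v : V, Real.sqrt ⟪A v, v⟫ = 1 ∧
          x = sInf {z : ℝ | ∃ w : W, P w = v ∧ z = ⟪Btinv w, w⟫}})⁻¹ ∧
    sSup {μ : ℝ | Module.End.HasEigenvalue (B ∘ₗ A) μ} =
      (sInf {x : ℝ | ∃ v : V, Real.sqrt ⟪A v, v⟫ = 1 ∧
          x = sInf {z : ℝ | ∃ w : W, P w = v ∧ z = ⟪Btinv w, w⟫}})⁻¹ := by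
  classical
  -- pointwise inverse relations for Bt
  have hBtBtinv : ∀ x : W, Bt (Btinv x) = x := fun x => LinearMap.ext_iff.mp h1 x
  have hBtinvBt : ∀ x : W, Btinv (Bt x) = x := fun x => LinearMap.ext_iff.mp h2 x
  have hBtinv_symm : ∀ x y : W, ⟪Btinv x, y⟫ = ⟪x, Btinv y⟫ := by
    intro x y
    conv_lhs => rw [← hBtBtinv y]
    rw [← hBtsym, hBtBtinv]
  have hBtinv_nonneg : ∀ k : W, 0 ≤ ⟪Btinv k, k⟫ := by
    intro k
    rcases eq_or_ne (Btinv k) 0 with h | h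
    · have : k = 0 := by rw [← hBtBtinv k, h, map_zero]
      simp [this]
    · have e : (⟪Btinv k, k⟫ : ℝ) = ⟪Btinv k, Bt (Btinv k)⟫ := by rw [hBtBtinv]
      rw [e, real_inner_comm]
      exact le_of_lt (hBtpos _ h)
  set Pt : V →ₗ[ℝ] W := LinearMap.adjoint P with hPtdef
  have hadj_left : ∀ (y : V) (x : W), ⟪Pt y, x⟫ = ⟪y, P x⟫ := fun y x =>
    LinearMap.adjoint_inner_left P x y
  have hadj_right : ∀ (x : W) (y : V), ⟪x, Pt y⟫ = ⟪P x, y⟫ := fun x y =>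
    LinearMap.adjoint_inner_right P x y
  have hPt_inj : ∀ v : V, Pt v = 0 → v = 0 := by
    intro v hv
    obtain ⟨w, hw⟩ := hP v
    have e : (⟪v, v⟫ : ℝ) = ⟪w, Pt v⟫ := by rw [hadj_right, hw]
    rw [hv, inner_zero_right] at e
    exact inner_self_eq_zero.mp e
  have hBapp : ∀ v : V, B v = P (Bt (Pt v)) := by
    intro v; rw [hB]; rfl
  have hBsymm : ∀ x y : V, ⟪B x, y⟫ = ⟪x, B y⟫ := by
    intro x y
    calc ⟪B x, y⟫ = ⟪P (Bt (Pt x)), y⟫ := by rw [hBapp]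
      _ = ⟪Bt (Pt x), Pt y⟫ := (hadj_right _ y).symm
      _ = ⟪Pt x, Bt (Pt y)⟫ := hBtsym _ _
      _ = ⟪x, P (Bt (Pt y))⟫ := hadj_left x _
      _ = ⟪x, B y⟫ := by rw [hBapp]
  have hBpos : ∀ v : V, v ≠ 0 → 0 < ⟪B v, v⟫ := by
    intro v hv
    have hPtv : Pt v ≠ 0 := fun h => hv (hPt_inj v h)
    have e : (⟪B v, v⟫ : ℝ) = ⟪Bt (Pt v), Pt v⟫ := by
      calc ⟪B v, v⟫ = ⟪P (Bt (Pt v)), v⟫ := by rw [hBapp]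
        _ = ⟪Bt (Pt v), Pt v⟫ := (hadj_right _ v).symm
    rw [e]
    exact hBtpos _ hPtv
  have hBinj : Function.Injective B := by
    rw [injective_iff_map_eq_zero]
    intro v hv
    by_contra h
    have := hBpos v h
    rw [hv, inner_zero_left] at this
    exact lt_irrefl 0 this
  have hAinj : Function.Injective A := by
    rw [injective_iff_map_eq_zero]
    intro v hv
    by_contra h
    have := hApos v h
    rw [hv, inner_zero_left] at this
    exact lt_irrefl 0 this
  have hBbij : Function.Bijective B := ⟨hBinj, (LinearMap.injective_iff_surjective).mp hBinj⟩
  set eB : V ≃ₗ[ℝ] V := LinearEquiv.ofBijective B hBbij with heB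
  set Binv : V →ₗ[ℝ] V := (eB.symm : V →ₗ[ℝ] V) with hBinvdef
  have hBinvB : ∀ v : V, Binv (B v) = v := fun v => eB.symm_apply_apply v
  have hBBinv : ∀ v : V, B (Binv v) = v := fun v => eB.apply_symm_apply v
  have hBinv_symm : ∀ x y : V, ⟪Binv x, y⟫ = ⟪x, Binv y⟫ := by
    intro x y
    conv_lhs => rw [← hBBinv y]
    rw [← hBsymm, hBBinv]
  have hBinv_pos : ∀ v : V, v ≠ 0 → 0 < ⟪Binv v, v⟫ := by
    intro v hv
    have hu : Binv v ≠ 0 := by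
      intro h
      apply hv
      rw [← hBBinv v, h, map_zero]
    have e : (⟪Binv v, v⟫ : ℝ) = ⟪Binv v, B (Binv v)⟫ := by rw [hBBinv]
    rw [e, real_inner_comm]
    exact hBpos _ hu
  -- Step 1: the inner infimum equals ⟪Binv v, v⟫
  have hstep1 : ∀ v : V,
      IsLeast {z : ℝ | ∃ w : W, P w = v ∧ z = ⟪Btinv w, w⟫} ⟪Binv v, v⟫ := by
    intro v
    set w0 : W := Bt (Pt (Binv v)) with hw0
    have hPw0 : P w0 = v := by
      rw [hw0, ← hBapp]
      exact hBBinv v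
    have hBtinvw0 : Btinv w0 = Pt (Binv v) := by rw [hw0, hBtinvBt]
    have hval : ⟪Btinv w0, w0⟫ = ⟪Binv v, v⟫ := by
      calc ⟪Btinv w0, w0⟫ = ⟪Pt (Binv v), Bt (Pt (Binv v))⟫ := by rw [hBtinvw0, hw0]
        _ = ⟪Bt (Pt (Binv v)), Pt (Binv v)⟫ := (hBtsym _ _).symm
        _ = ⟪P (Bt (Pt (Binv v))), Binv v⟫ := hadj_right _ _
        _ = ⟪B (Binv v), Binv v⟫ := by rw [hBapp]
        _ = ⟪v, Binv v⟫ := by rw [hBBinv]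
        _ = ⟪Binv v, v⟫ := real_inner_comm _ _
    constructor
    · exact ⟨w0, hPw0, hval.symm⟩
    · rintro z ⟨w, hPw, rfl⟩
      have hk : P (w - w0) = 0 := by rw [map_sub, hPw, hPw0, sub_self]
      have hcross : ⟪Btinv w0, w - w0⟫ = 0 := by
        rw [hBtinvw0, hadj_left, hk, inner_zero_right]
      have hcross2 : ⟪Btinv (w - w0), w0⟫ = 0 := by
        rw [hBtinv_symm, real_inner_comm]; exact hcross
      have hdecomp : ⟪Btinv w, w⟫
          = ⟪Btinv w0, w0⟫ + ⟪Btinv (w - w0), w - w0⟫ := by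
        have hw : w = w0 + (w - w0) := by abel
        conv_lhs => rw [hw]
        rw [map_add, inner_add_left, inner_add_right, inner_add_right, hcross, hcross2]
        ring
      rw [hdecomp, hval]
      have := hBtinv_nonneg (w - w0)
      linarith
  -- Rewrite the right-hand side sets
  have hsets : {x : ℝ | ∃ v : V, Real.sqrt ⟪A v, v⟫ = 1 ∧
        x = sInf {z : ℝ | ∃ w : W, P w = v ∧ z = ⟪Btinv w, w⟫}}
      = {x : ℝ | ∃ v : V, Real.sqrt ⟪A v, v⟫ = 1 ∧ x = ⟪Binv v, v⟫} := by
    ext x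
    constructor
    · rintro ⟨v, hv, rfl⟩
      exact ⟨v, hv, (hstep1 v).csInf_eq⟩
    · rintro ⟨v, hv, rfl⟩
      exact ⟨v, hv, (hstep1 v).csInf_eq.symm⟩
  rw [hsets]
  set R : Set ℝ := {x : ℝ | ∃ v : V, Real.sqrt ⟪A v, v⟫ = 1 ∧ x = ⟪Binv v, v⟫} with hRdef
  rcases subsingleton_or_nontrivial V with hV | hV
  · -- trivial case
    have he1 : {μ : ℝ | Module.End.HasEigenvalue (B ∘ₗ A) μ} = ∅ := by
      ext μ
      simp only [Set.mem_setOf_eq, Set.mem_empty_iff_false, iff_false]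
      intro h
      obtain ⟨v, hv⟩ := h.exists_hasEigenvector
      exact hv.2 (Subsingleton.elim v 0)
    have he2 : R = ∅ := by
      ext x
      simp only [hRdef, Set.mem_setOf_eq, Set.mem_empty_iff_false, iff_false]
      rintro ⟨v, hv, rfl⟩
      rw [Subsingleton.elim v 0, inner_zero_right, Real.sqrt_zero] at hv
      exact zero_ne_one hv
    rw [he1, he2]
    simp [Real.sInf_empty, Real.sSup_empty]
  · -- nontrivial case
    -- the inverse of B ∘ₗ A
    have hBAinj : Function.Injective (B ∘ₗ A) := by
      intro x y hxy
      exact hAinj (hBinj hxy)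
    have hBAbij : Function.Bijective (B ∘ₗ A) :=
      ⟨hBAinj, (LinearMap.injective_iff_surjective).mp hBAinj⟩
    set eBA : V ≃ₗ[ℝ] V := LinearEquiv.ofBijective (B ∘ₗ A) hBAbij with heBA
    set S : V →ₗ[ℝ] V := (eBA.symm : V →ₗ[ℝ] V) with hSdef
    have hBAS : ∀ v : V, B (A (S v)) = v := fun v => eBA.apply_symm_apply v
    have hSBA : ∀ v : V, S (B (A v)) = v := fun v => eBA.symm_apply_apply v
    have hAS : ∀ v : V, A (S v) = Binv v := by
      intro v
      rw [← hBinvB (A (S v)), hBAS]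
    have hSsym' : ∀ x y : V, ⟪A (S x), y⟫ = ⟪A x, S y⟫ := by
      intro x y
      rw [hAS, hBinv_symm, ← hAS, ← hAsym]
    -- positivity of eigenvalues
    have hBA_pos : ∀ μ : ℝ, Module.End.HasEigenvalue (B ∘ₗ A) μ → 0 < μ := by
      intro μ hμ
      obtain ⟨v, hv⟩ := hμ.exists_hasEigenvector
      have hv0 : v ≠ 0 := hv.2
      have hv1 : B (A v) = μ • v := hv.apply_eq_smul
      have hAv : A v ≠ 0 := fun h => hv0 (hAinj (by rw [h, map_zero]))
      have h2 : (0:ℝ) < ⟪B (A v), A v⟫ := hBpos _ hAv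
      rw [hv1, real_inner_smul_left] at h2
      have h3 : (0:ℝ) < ⟪v, A v⟫ := by rw [real_inner_comm]; exact hApos v hv0
      rcases mul_pos_iff.mp h2 with ⟨h, _⟩ | ⟨_, h⟩
      · exact h
      · linarith
    have hS_pos : ∀ ν : ℝ, Module.End.HasEigenvalue S ν → 0 < ν := by
      intro ν hν
      obtain ⟨v, hv⟩ := hν.exists_hasEigenvector
      have hv0 : v ≠ 0 := hv.2
      have hv1 : S v = ν • v := hv.apply_eq_smul
      have h2 : (0:ℝ) < ⟪Binv v, v⟫ := hBinv_pos v hv0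
      rw [← hAS, hv1, map_smul, real_inner_smul_left] at h2
      have h3 : (0:ℝ) < ⟪A v, v⟫ := hApos v hv0
      rcases mul_pos_iff.mp h2 with ⟨h, _⟩ | ⟨_, h⟩
      · exact h
      · linarith
    -- eigenvalue correspondence
    have hBA_to_S : ∀ μ : ℝ, Module.End.HasEigenvalue (B ∘ₗ A) μ →
        Module.End.HasEigenvalue S μ⁻¹ := by
      intro μ hμ
      have hμ0 : 0 < μ := hBA_pos μ hμ
      obtain ⟨v, hv⟩ := hμ.exists_hasEigenvector
      have hv1 : B (A v) = μ • v := hv.apply_eq_smul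
      have hSv : S v = μ⁻¹ • v := by
        have h' : μ • S v = v := by
          have := hSBA v
          rwa [hv1, map_smul] at this
        have h'' : S v = μ⁻¹ • (μ • S v) := by
          rw [smul_smul, inv_mul_cancel₀ (ne_of_gt hμ0), one_smul]
        rw [h'', h']
      exact Module.End.hasEigenvalue_of_hasEigenvector
        ⟨Module.End.mem_eigenspace_iff.mpr hSv, hv.2⟩
    have hS_to_BA : ∀ ν : ℝ, Module.End.HasEigenvalue S ν →
        Module.End.HasEigenvalue (B ∘ₗ A) ν⁻¹ := by
      intro ν hν
      have hν0 : 0 < ν := hS_pos ν hν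
      obtain ⟨v, hv⟩ := hν.exists_hasEigenvector
      have hv1 : S v = ν • v := hv.apply_eq_smul
      have hBAv : (B ∘ₗ A) v = ν⁻¹ • v := by
        have h' : ν • B (A v) = v := by
          have := hBAS v
          rwa [hv1, map_smul, map_smul] at this
        show B (A v) = ν⁻¹ • v
        have h'' : B (A v) = ν⁻¹ • (ν • B (A v)) := by
          rw [smul_smul, inv_mul_cancel₀ (ne_of_gt hν0), one_smul]
        rw [h'', h']
      exact Module.End.hasEigenvalue_of_hasEigenvector
        ⟨Module.End.mem_eigenspace_iff.mpr hBAv, hv.2⟩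
    -- set up the A-inner-product space
    letI : AddCommGroup (VAsyn V) := inferInstanceAs (AddCommGroup V)
    letI : Module ℝ (VAsyn V) := inferInstanceAs (Module ℝ V)
    letI core : InnerProductSpace.Core ℝ (VAsyn V) :=
      { inner := fun x y => ⟪A (show V from x), (show V from y)⟫
        conj_inner_symm := fun x y => by
          simp only [starRingEnd_apply, star_trivial]
          exact (hAsym y x).trans (real_inner_comm (A x) y)
        re_inner_nonneg := fun x => by
          rcases eq_or_ne (show V from x) 0 with h | h
          · simp [h]
          · exact le_of_lt (by simpa using hApos _ h)
        definite := fun x hx => by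
          by_contra h
          exact absurd hx (ne_of_gt (hApos _ h))
        add_left := fun x y z => by
          rw [show A (x + y) = A x + A y from map_add A x y]; exact inner_add_left (A x) (A y) z
        smul_left := fun x y c => by
          rw [show A (c • x) = c • A x from map_smul A c x]; exact real_inner_smul_left (A x) y c }
    letI : NormedAddCommGroup (VAsyn V) := core.toNormedAddCommGroup
    letI : InnerProductSpace ℝ (VAsyn V) := InnerProductSpace.ofCore core.toCore
    letI : FiniteDimensional ℝ (VAsyn V) := inferInstanceAs (FiniteDimensional ℝ V)
    letI : Nontrivial (VAsyn V) := inferInstanceAs (Nontrivial V)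
    set SA : (VAsyn V) →ₗ[ℝ] (VAsyn V) := S with hSA
    have hsym : SA.IsSymmetric := by
      intro x y
      exact hSsym' x y
    have key := aux_sym SA hsym
    have hnorm : ∀ v : VAsyn V, ‖v‖ = Real.sqrt ⟪A (show V from v), (show V from v)⟫ := by
      intro v
      rw [norm_eq_sqrt_real_inner]
      rfl
    have hRA : {x : ℝ | ∃ v : VAsyn V, ‖v‖ = 1 ∧ x = ⟪SA v, v⟫} = R := by
      ext x
      constructor
      · rintro ⟨v, hv, rfl⟩
        refine ⟨(show V from v), by rwa [hnorm] at hv, ?_⟩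
        show (⟪A (S (show V from v)), (show V from v)⟫ : ℝ) = _
        rw [hAS]
      · rintro ⟨v, hv, rfl⟩
        refine ⟨(show VAsyn V from v), by rwa [hnorm], ?_⟩
        show _ = (⟪A (S v), v⟫ : ℝ)
        rw [hAS]
    rw [hRA] at key
    have hEtrans : {μ : ℝ | Module.End.HasEigenvalue SA μ}
        = {μ : ℝ | Module.End.HasEigenvalue S μ} := rfl
    rw [hEtrans] at key
    obtain ⟨hG, hL⟩ := key
    have hg_pos : 0 < sSup R := hS_pos _ hG.1
    have hl_pos : 0 < sInf R := hS_pos _ hL.1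
    constructor
    · -- sInf of eigenvalues = (sSup R)⁻¹
      refine IsLeast.csInf_eq ⟨hS_to_BA _ hG.1, ?_⟩
      intro μ hμ
      have hμ0 : 0 < μ := hBA_pos μ hμ
      have h1' : μ⁻¹ ≤ sSup R := hG.2 (hBA_to_S μ hμ)
      rw [← inv_inv μ]
      exact inv_anti₀ (inv_pos.mpr hμ0) h1'
    · -- sSup of eigenvalues = (sInf R)⁻¹
      refine IsGreatest.csSup_eq ⟨hS_to_BA _ hL.1, ?_⟩
      intro μ hμ
      have hμ0 : 0 < μ := hBA_pos μ hμ
      have h1' : sInf R ≤ μ⁻¹ := hL.2 (hBA_to_S μ hμ)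
      rw [← inv_inv μ]
      exact inv_anti₀ hl_pos h1'
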